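/- Let p ≥ 1 and ℓ ≥ 0 be integers, and let a, b, c be nonnegative integers with (a mod p) ≤ p/3, (b mod p) ≤ p/3, and a + b = c. Define a^(ℓ) = ⌊(a mod p)/2^ℓ⌋, b^(ℓ) = ⌊(b mod p)/2^ℓ⌋. Suppose c^(ℓ) is any integer satisfying ⌊((c mod p) − 2(2^ℓ − 1))/2^ℓ⌋ ≤ c^(ℓ) ≤ ⌊((c mod p) + 2(2^ℓ − 1))/2^ℓ⌋. Then a^(ℓ) + b^(ℓ) − c^(ℓ) ∈ [−4, 3]. -/

import Mathlib

lemma le_fdiv_aux {x L k : ℤ} (hL : 0 < L) (h : k * L ≤ x) : k ≤ x.fdiv L := by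
  have h1 := Int.fmod_add_mul_fdiv x L
  have h2 := Int.fmod_lt_of_pos x hL
  nlinarith [Int.fmod_nonneg_of_pos x hL]

lemma fdiv_le_aux {x L k : ℤ} (hL : 0 < L) (h : x < (k + 1) * L) : x.fdiv L ≤ k := by
  have h1 := Int.fmod_add_mul_fdiv x L
  have h2 := Int.fmod_nonneg_of_pos x hL
  nlinarith

/-- Approximate additivity of scaled-down remainders: with no-carry remainders
(`(a mod p), (b mod p) ≤ p/3`) and `a + b = c`, if `a^(ℓ) = ⌊(a mod p)/2^ℓ⌋`,
`b^(ℓ) = ⌊(b mod p)/2^ℓ⌋`, and `c^(ℓ)` is any integer with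
`⌊((c mod p) − 2(2^ℓ−1))/2^ℓ⌋ ≤ c^(ℓ) ≤ ⌊((c mod p) + 2(2^ℓ−1))/2^ℓ⌋`, then
`a^(ℓ) + b^(ℓ) − c^(ℓ) ∈ [−4, 3]`. -/
theorem approx_quotient_additivity (p : ℕ) (hp : 0 < p) (l : ℕ) (a b c : ℕ)
    (ha : 3 * (a % p) ≤ p) (hb : 3 * (b % p) ≤ p) (habc : a + b = c)
    (cl : ℤ)
    (hcl1 : Int.fdiv (((c % p : ℕ) : ℤ) - 2 * (2 ^ l - 1)) (2 ^ l) ≤ cl)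
    (hcl2 : cl ≤ Int.fdiv (((c % p : ℕ) : ℤ) + 2 * (2 ^ l - 1)) (2 ^ l)) :
    -4 ≤ (((a % p) / 2 ^ l : ℕ) : ℤ) + (((b % p) / 2 ^ l : ℕ) : ℤ) - cl ∧
      (((a % p) / 2 ^ l : ℕ) : ℤ) + (((b % p) / 2 ^ l : ℕ) : ℤ) - cl ≤ 3 := by
  have hC : c % p = a % p + b % p := by
    have h1 : a % p + b % p < p := by omega
    subst habc
    rw [Nat.add_mod, Nat.mod_eq_of_lt]
    exact h1
  rw [hC] at hcl1 hcl2
  set L : ℤ := 2 ^ l with hLdef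
  have hL : 0 < L := by positivity
  set A : ℤ := ((a % p : ℕ) : ℤ) with hA
  set B : ℤ := ((b % p : ℕ) : ℤ) with hB
  have hcast : ((a % p + b % p : ℕ) : ℤ) = A + B := by rw [hA, hB]; exact_mod_cast rfl
  rw [hcast] at hcl1 hcl2
  have hqa : (((a % p) / 2 ^ l : ℕ) : ℤ) = A / L := by
    rw [hA, hLdef]; push_cast [Int.natCast_div]; norm_num
  have hqb : (((b % p) / 2 ^ l : ℕ) : ℤ) = B / L := by
    rw [hB, hLdef]; push_cast [Int.natCast_div]; norm_num
  rw [hqa, hqb]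
  have hqaA : (A / L) * L ≤ A := Int.ediv_mul_le A (by positivity)
  have hqbB : (B / L) * L ≤ B := Int.ediv_mul_le B (by positivity)
  have hAlt : A < (A / L + 1) * L := Int.lt_ediv_add_one_mul_self A hL
  have hBlt : B < (B / L + 1) * L := Int.lt_ediv_add_one_mul_self B hL
  constructor
  · -- cl ≤ A/L + B/L + 4 : use hcl2 and fdiv_le_aux
    have : Int.fdiv ((A + B) + 2 * (L - 1)) L ≤ A / L + B / L + 3 := by
      apply fdiv_le_aux hL
      nlinarith
    linarith
  · -- A/L + B/L - 2 ≤ fdiv ((A+B) - 2(L-1)) L ≤ cl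
    have : A / L + B / L - 2 ≤ Int.fdiv ((A + B) - 2 * (L - 1)) L := by
      apply le_fdiv_aux hL
      nlinarith
    linarith
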